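/- Let E be a finite cofinal directed graph that contains at least one loop and in which every simple loop has an exit. Then for every nonzero element x of the graph monoid M_E there exists a nonzero y ∈ M_E with x = x + y; consequently M_E ∖ {0} is a group under addition. -/

import Mathlib

/-- A row-finite directed graph: vertex set `V`, edge set `Edge`,
source and range maps, with every vertex emitting finitely many edges. -/
structure RFGraph where
  V : Type
  Edge : Type
  s : Edge → V
  r : Edge → V
  rowFinite : ∀ v : V, {e : Edge | s e = v}.Finite

namespace RFGraph

/-- The free abelian monoid on the vertex set. -/
abbrev F (G : RFGraph) : Type := G.V →₀ ℕ

/-- `v` emits at least one edge. -/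
def emits (G : RFGraph) (v : G.V) : Prop := ∃ e : G.Edge, G.s e = v

/-- `𝐫(v) = Σ_{e ∈ s⁻¹(v)} r(e)` in the free abelian monoid. -/
noncomputable def rr (G : RFGraph) (v : G.V) : G.F :=
  ∑ e ∈ (G.rowFinite v).toFinset, Finsupp.single (G.r e) 1

/-- The one-step relation `→₁`: `α →₁ β` iff `α = x + α'` for a vertex `x`
emitting at least one edge, and `β = 𝐫(x) + α'`. -/
def step (G : RFGraph) (α β : G.F) : Prop :=
  ∃ (x : G.V) (α' : G.F), G.emits x ∧ α = Finsupp.single x 1 + α' ∧ β = G.rr x + α'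

/-- The reflexive-transitive closure `→` of `→₁`. -/
def steps (G : RFGraph) : G.F → G.F → Prop := Relation.ReflTransGen G.step

/-- The additive congruence `∼` on `F_E` generated by `→₁`. -/
noncomputable def graphCon (G : RFGraph) : AddCon G.F := addConGen G.step

/-- The graph monoid `M_E = F_E/∼`. -/
abbrev M (G : RFGraph) : Type := G.graphCon.Quotient

/-- The class `a_v` of a vertex `v` in the graph monoid. -/
noncomputable def av (G : RFGraph) (v : G.V) : G.M := G.graphCon.mk' (Finsupp.single v 1)

end RFGraph

namespace RFGraph

/-- `v ≥ w`: there is a (possibly empty) directed path from `v` to `w`. -/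
def reaches (G : RFGraph) : G.V → G.V → Prop :=
  Relation.ReflTransGen (fun a b => ∃ e : G.Edge, G.s e = a ∧ G.r e = b)

/-- A sink is a vertex emitting no edges. -/
def IsSink (G : RFGraph) (v : G.V) : Prop := ¬ G.emits v

/-- An infinite directed path, given by its sequence of edges. -/
def IsInfPath (G : RFGraph) (γ : ℕ → G.Edge) : Prop :=
  ∀ n : ℕ, G.r (γ n) = G.s (γ (n + 1))

/-- `E` is cofinal: every vertex connects to a vertex on any element of `E^{≤∞}`,
i.e. to every sink and to a vertex on every infinite path. -/
def Cofinal (G : RFGraph) : Prop :=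
  (∀ v w : G.V, G.IsSink w → G.reaches v w) ∧
  (∀ (v : G.V) (γ : ℕ → G.Edge), G.IsInfPath γ → ∃ n : ℕ, G.reaches v (G.s (γ n)))

end RFGraph

namespace RFGraph

/-- A loop of length `n+1`, presented as a cyclic sequence of edges:
`r(f i) = s(f (i+1))` with indices taken mod `n+1`. -/
def IsLoop (G : RFGraph) {n : ℕ} (f : Fin (n + 1) → G.Edge) : Prop :=
  ∀ i : Fin (n + 1), G.r (f i) = G.s (f (i + 1))

/-- A simple loop: the sources of its edges are pairwise distinct. -/
def IsSimpleLoop (G : RFGraph) {n : ℕ} (f : Fin (n + 1) → G.Edge) : Prop :=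
  G.IsLoop f ∧ Function.Injective fun i => G.s (f i)

/-- The loop `f` has an exit: an edge starting at a vertex of the loop that is
not one of the edges of the loop. -/
def HasExit (G : RFGraph) {n : ℕ} (f : Fin (n + 1) → G.Edge) : Prop :=
  ∃ e : G.Edge, (∃ i : Fin (n + 1), G.s e = G.s (f i)) ∧ ∀ i : Fin (n + 1), e ≠ f i

end RFGraph

namespace RFGraph

variable (G : RFGraph)

open Fin.NatCast

lemma addeq0 {a b : G.F} (h : a + b = 0) : a = 0 ∧ b = 0 := by
  constructor <;> ext v <;>
  · have h1 := congrFun (congrArg (DFunLike.coe) h) v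
    simp [Finsupp.add_apply] at h1
    simp [h1]

lemma Fcancel {a b c : G.F} (h : a + b = a + c) : b = c := by
  ext v
  have h1 := congrFun (congrArg (DFunLike.coe) h) v
  simp [Finsupp.add_apply] at h1
  omega

lemma sum_single_ne_zero {T : Finset G.Edge} (h : T.Nonempty) :
    (∑ e ∈ T, Finsupp.single (G.r e) (1 : ℕ)) ≠ 0 := by
  obtain ⟨e, he⟩ := h
  intro h0
  have h1 := congrFun (congrArg (DFunLike.coe) h0) (G.r e)
  rw [Finsupp.finset_sum_apply] at h1
  have h2 : (Finsupp.single (G.r e) (1 : ℕ)) (G.r e)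
      ≤ ∑ e' ∈ T, (Finsupp.single (G.r e') (1 : ℕ)) (G.r e) :=
    Finset.single_le_sum (f := fun e' => (Finsupp.single (G.r e') (1:ℕ)) (G.r e)) (fun _ _ => Nat.zero_le _) he
  simp only [Finsupp.coe_zero, Pi.zero_apply] at h1
  simp at h2
  omega

lemma rr_ne_zero {v : G.V} (h : G.emits v) : G.rr v ≠ 0 := by
  obtain ⟨e, he⟩ := h
  exact G.sum_single_ne_zero ⟨e, (G.rowFinite v).mem_toFinset.2 he⟩

lemma cancel_single {x y : G.V} {a₁ a₂ : G.F} (hxy : x ≠ y)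
    (h : Finsupp.single x 1 + a₁ = Finsupp.single y 1 + a₂) :
    ∃ a₃, a₁ = Finsupp.single y 1 + a₃ ∧ a₂ = Finsupp.single x 1 + a₃ := by
  have hy : (Finsupp.single y 1 : G.F) ≤ a₁ := by
    rw [Finsupp.single_le_iff]
    have h1 := congrFun (congrArg (DFunLike.coe) h) y
    simp [Finsupp.add_apply, Finsupp.single_apply, hxy] at h1
    omega
  obtain ⟨a₃, h3⟩ := exists_add_of_le hy
  refine ⟨a₃, h3, ?_⟩
  apply G.Fcancel (a := Finsupp.single y 1)
  rw [← h, h3]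
  abel

-- ### step/steps basics

lemma step_add {a b c : G.F} (h : G.step a b) : G.step (a + c) (b + c) := by
  obtain ⟨x, α', hx, h1, h2⟩ := h
  exact ⟨x, α' + c, hx, by rw [h1, add_assoc], by rw [h2, add_assoc]⟩

lemma steps_add {a b c : G.F} (h : G.steps a b) : G.steps (a + c) (b + c) := by
  induction h with
  | refl => exact Relation.ReflTransGen.refl
  | tail _ h2 ih => exact ih.tail (G.step_add h2)

lemma steps_add₂ {a b a' b' : G.F} (h : G.steps a b) (h' : G.steps a' b') :
    G.steps (a + a') (b + b') :=
  (G.steps_add h).trans (by rw [add_comm b, add_comm b]; exact G.steps_add h')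

lemma step_rr {v : G.V} (h : G.emits v) : G.step (Finsupp.single v 1) (G.rr v) :=
  ⟨v, 0, h, by simp, by simp⟩

lemma diamond : ∀ a b c, G.step a b → G.step a c →
    ∃ d, Relation.ReflGen G.step b d ∧ Relation.ReflTransGen G.step c d := by
  rintro a b c ⟨x, a₁, hx, rfl, rfl⟩ ⟨y, a₂, hy, he, rfl⟩
  by_cases hxy : x = y
  · subst hxy
    have : a₁ = a₂ := G.Fcancel he
    subst this
    exact ⟨G.rr x + a₁, Relation.ReflGen.refl, Relation.ReflTransGen.refl⟩
  · obtain ⟨a₃, h1, h2⟩ := G.cancel_single hxy he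
    refine ⟨G.rr x + G.rr y + a₃, ?_, ?_⟩
    · apply Relation.ReflGen.single
      refine ⟨y, G.rr x + a₃, hy, ?_, ?_⟩
      · rw [h1]; abel
      · abel
    · apply Relation.ReflTransGen.single
      refine ⟨x, G.rr y + a₃, hx, ?_, ?_⟩
      · rw [h2]; abel
      · abel

noncomputable def joinCon : AddCon G.F where
  r := Relation.Join G.steps
  iseqv := Relation.equivalence_join_reflTransGen G.diamond
  add' := by
    rintro a b a' b' ⟨c, h1, h2⟩ ⟨c', h1', h2'⟩
    exact ⟨c + c', G.steps_add₂ h1 h1', G.steps_add₂ h2 h2'⟩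

lemma steps_con {a b : G.F} (h : G.steps a b) : G.graphCon a b := by
  induction h with
  | refl => exact G.graphCon.refl a
  | tail _ h2 ih => exact G.graphCon.trans ih (AddConGen.Rel.of _ _ h2)

lemma graphCon_iff {a b : G.F} : G.graphCon a b ↔ Relation.Join G.steps a b := by
  constructor
  · intro h
    exact (AddCon.addConGen_le (c := G.joinCon)).2
      (fun x y hxy => ⟨y, Relation.ReflTransGen.single hxy, Relation.ReflTransGen.refl⟩)
      h
  · rintro ⟨c, h1, h2⟩
    exact G.graphCon.trans (G.steps_con h1) (G.graphCon.symm (G.steps_con h2))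

lemma mk_eq_iff {a b : G.F} :
    G.graphCon.mk' a = G.graphCon.mk' b ↔ Relation.Join G.steps a b := by
  rw [show G.graphCon.mk' a = (a : G.M) from rfl, show G.graphCon.mk' b = (b : G.M) from rfl,
    AddCon.eq, G.graphCon_iff]

lemma mk_steps {a b : G.F} (h : G.steps a b) : G.graphCon.mk' a = G.graphCon.mk' b :=
  G.mk_eq_iff.2 ⟨b, h, Relation.ReflTransGen.refl⟩

lemma step_ne_zero {a b : G.F} (h : G.step a b) : a ≠ 0 ∧ b ≠ 0 := by
  obtain ⟨x, α', hx, rfl, rfl⟩ := h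
  constructor
  · intro h0
    have := (G.addeq0 h0).1
    simp [Finsupp.single_eq_zero] at this
  · intro h0
    exact G.rr_ne_zero hx (G.addeq0 h0).1

lemma steps_from_zero {b : G.F} (h : G.steps 0 b) : b = 0 := by
  have key : ∀ a b : G.F, G.steps a b → a = 0 → b = 0 := by
    intro a b h
    induction h using Relation.ReflTransGen.head_induction_on with
    | refl => exact id
    | head h1 _ _ => exact fun h0 => absurd h0 (G.step_ne_zero h1).1
  exact key 0 b h rfl

lemma steps_to_zero {a : G.F} (h : G.steps a 0) : a = 0 := by
  have key : ∀ a b : G.F, G.steps a b → b = 0 → a = 0 := by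
    intro a b h
    induction h with
    | refl => exact id
    | tail _ h2 _ => exact fun h0 => absurd h0 (G.step_ne_zero h2).2
  exact key a 0 h rfl

lemma mk_zero_iff {a : G.F} : G.graphCon.mk' a = 0 ↔ a = 0 := by
  constructor
  · intro h
    rw [show (0 : G.M) = G.graphCon.mk' 0 from (map_zero _).symm] at h
    obtain ⟨c, h1, h2⟩ := G.mk_eq_iff.1 h
    exact G.steps_to_zero ((G.steps_from_zero h2) ▸ h1)
  · rintro rfl; exact map_zero _

/-- split `rr` at an edge -/

lemma rr_split [DecidableEq G.Edge] {v : G.V} {e : G.Edge} (he : G.s e = v) :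
    G.rr v = Finsupp.single (G.r e) 1
      + ∑ e' ∈ ((G.rowFinite v).toFinset.erase e), Finsupp.single (G.r e') 1 := by
  rw [rr, ← Finset.add_sum_erase _ _ ((G.rowFinite v).mem_toFinset.2 he)]

lemma reaches_steps {a b : G.V} (h : G.reaches a b) :
    ∃ δ : G.F, G.steps (Finsupp.single a 1) (Finsupp.single b 1 + δ) := by
  classical
  induction h with
  | refl => exact ⟨0, by rw [add_zero]; exact Relation.ReflTransGen.refl⟩
  | tail _ h2 ih =>
      obtain ⟨δ, hδ⟩ := ih
      obtain ⟨e, he1, he2⟩ := h2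
      refine ⟨(∑ e' ∈ ((G.rowFinite (G.s e)).toFinset.erase e), Finsupp.single (G.r e') 1) + δ, ?_⟩
      refine hδ.tail ?_
      refine ⟨G.s e, δ, ⟨e, rfl⟩, by rw [he1], ?_⟩
      rw [G.rr_split rfl, he2, add_assoc]

lemma reaches_le {a b : G.V} (h : G.reaches a b) : ∃ c : G.M, G.av a = G.av b + c := by
  obtain ⟨δ, hδ⟩ := G.reaches_steps h
  exact ⟨G.graphCon.mk' δ, by rw [av, av, G.mk_steps hδ, map_add]⟩

lemma decomp {x : G.M} (hx : x ≠ 0) : ∃ (v : G.V) (c : G.M), x = G.av v + c := by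
  obtain ⟨α, rfl⟩ := AddCon.mk'_surjective x
  have hα : α ≠ 0 := fun h => hx (G.mk_zero_iff.2 h)
  obtain ⟨v, hv⟩ : ∃ v, α v ≠ 0 := by
    by_contra h
    push_neg at h
    exact hα (Finsupp.ext fun v => h v)
  have h1 : (Finsupp.single v 1 : G.F) ≤ α := Finsupp.single_le_iff.2 (by omega)
  obtain ⟨α₂, h2⟩ := exists_add_of_le h1
  exact ⟨v, G.graphCon.mk' α₂, by rw [h2, map_add]; rfl⟩

lemma av_eq_sum {v : G.V} (h : G.emits v) :
    G.av v = ∑ e ∈ (G.rowFinite v).toFinset, G.av (G.r e) := by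
  rw [av, G.mk_steps (Relation.ReflTransGen.single (G.step_rr h)), rr, map_sum]
  rfl

lemma loop_next {n : ℕ} {f : Fin (n + 1) → G.Edge} (hf : G.IsLoop f) (k : ℕ) :
    G.r (f (k : Fin (n+1))) = G.s (f (((k + 1 : ℕ)) : Fin (n+1))) := by
  rw [Nat.cast_add_one]
  exact hf k

lemma loop_traverse {n : ℕ} {f : Fin (n+1) → G.Edge} (hf : G.IsLoop f)
    {i₀ : Fin (n+1)} {e₀ : G.Edge} (hs : G.s e₀ = G.s (f i₀)) (hne : e₀ ≠ f i₀) :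
    ∀ k : ℕ, k ≤ n + 1 → ∃ δ : G.F,
      G.steps (Finsupp.single (G.s (f 0)) 1) (Finsupp.single (G.s (f (k : Fin (n+1)))) 1 + δ)
      ∧ ((i₀ : ℕ) < k → δ ≠ 0) := by
  classical
  intro k
  induction k with
  | zero =>
      intro _
      exact ⟨0, by rw [Nat.cast_zero, add_zero]; exact Relation.ReflTransGen.refl, by omega⟩
  | succ k ih =>
    intro hk
    obtain ⟨δ, hst, hδ⟩ := ih (by omega)
    set ρ : G.F := ∑ e' ∈ ((G.rowFinite (G.s (f (k : Fin (n+1))))).toFinset.erase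
      (f (k : Fin (n+1)))), Finsupp.single (G.r e') 1 with hρ
    refine ⟨ρ + δ, ?_, ?_⟩
    · refine hst.tail ?_
      refine ⟨G.s (f (k : Fin (n+1))), δ, ⟨f (k : Fin (n+1)), rfl⟩, rfl, ?_⟩
      rw [G.rr_split (e := f (k : Fin (n+1))) rfl, G.loop_next hf k, add_assoc]
    · intro hlt
      rcases Nat.lt_or_ge (i₀ : ℕ) k with h | h
      · intro h0; exact hδ h (G.addeq0 h0).2
      · have hik : (i₀ : ℕ) = k := by omega
        have hfk : i₀ = (k : Fin (n+1)) := by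
          apply Fin.ext
          rw [Fin.val_cast_of_lt (by omega), hik]
        have hρne : ρ ≠ 0 := by
          apply G.sum_single_ne_zero
          refine ⟨e₀, Finset.mem_erase.2 ⟨by rw [← hfk]; exact hne, ?_⟩⟩
          rw [Set.Finite.mem_toFinset, ← hfk]
          exact hs
        intro h0
        exact hρne (G.addeq0 h0).1

lemma loop_absorb {n : ℕ} {f : Fin (n+1) → G.Edge} (hf : G.IsLoop f)
    (hx : ∃ (i₀ : Fin (n+1)) (e₀ : G.Edge), G.s e₀ = G.s (f i₀) ∧ e₀ ≠ f i₀) :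
    ∃ δ : G.F, δ ≠ 0 ∧
      G.steps (Finsupp.single (G.s (f 0)) 1) (Finsupp.single (G.s (f 0)) 1 + δ) := by
  obtain ⟨i₀, e₀, hs, hne⟩ := hx
  obtain ⟨δ, hst, hδ⟩ := G.loop_traverse hf hs hne (n+1) le_rfl
  rw [show (((n+1 : ℕ)) : Fin (n+1)) = 0 from Fin.natCast_self (n+1)] at hst
  exact ⟨δ, hδ i₀.isLt, hst⟩

lemma loop_reach_zero {n : ℕ} {f : Fin (n+1) → G.Edge} (hf : G.IsLoop f) (k : ℕ) :
    G.reaches (G.s (f (k : Fin (n+1)))) (G.s (f 0)) := by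
  have key : ∀ j a : ℕ,
      G.reaches (G.s (f (a : Fin (n+1)))) (G.s (f ((a + j : ℕ) : Fin (n+1)))) := by
    intro j
    induction j with
    | zero => intro a; exact Relation.ReflTransGen.refl
    | succ j ih =>
      intro a
      have h1 : G.reaches (G.s (f (a : Fin (n+1)))) (G.s (f ((a + 1 : ℕ) : Fin (n+1)))) :=
        Relation.ReflTransGen.single ⟨f (a : Fin (n+1)), rfl, G.loop_next hf a⟩
      have h2 := ih (a + 1)
      rw [show a + 1 + j = a + (j + 1) by omega] at h2
      exact h1.trans h2
  have hd := Nat.div_add_mod k (n+1)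
  have hm : k % (n+1) < n + 1 := Nat.mod_lt _ (Nat.succ_pos n)
  have h2 := key ((n+1) - k % (n+1)) k
  have hmul : (n+1) * (k / (n+1) + 1) = (n+1) * (k / (n+1)) + (n+1) := by ring
  have h3 : k + ((n+1) - k % (n+1)) = (n+1) * (k / (n+1) + 1) := by omega
  rw [h3, show (((n+1) * (k / (n+1) + 1) : ℕ) : Fin (n+1)) = 0 by
    exact Fin.ext (by rw [Fin.val_natCast, Nat.mul_mod_right]; rfl)] at h2
  exact h2

lemma all_reach {n : ℕ} {f : Fin (n+1) → G.Edge} (hf : G.IsLoop f) (hcof : G.Cofinal)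
    (u : G.V) : G.reaches u (G.s (f 0)) := by
  obtain ⟨k, hk⟩ := hcof.2 u (fun k => f (k : Fin (n+1))) (fun k => G.loop_next hf k)
  exact hk.trans (G.loop_reach_zero hf k)

lemma exists_exit {n : ℕ} {f : Fin (n+1) → G.Edge} (hf : G.IsLoop f)
    (hexit : ∀ (m : ℕ) (g : Fin (m + 1) → G.Edge), G.IsSimpleLoop g → G.HasExit g) :
    ∃ (i₀ : Fin (n+1)) (e₀ : G.Edge), G.s e₀ = G.s (f i₀) ∧ e₀ ≠ f i₀ := by
  by_contra hcon
  push_neg at hcon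
  -- hcon : ∀ i₀ e₀, G.s e₀ = G.s (f i₀) → e₀ = f i₀
  set v : ℕ → G.V := fun k => G.s (f (k : Fin (n+1))) with hv
  have hshift : ∀ i j : ℕ, v i = v j → ∀ k, v (i + k) = v (j + k) := by
    intro i j hij k
    induction k with
    | zero => simpa using hij
    | succ k ih =>
      have hfe : f ((j + k : ℕ) : Fin (n+1)) = f ((i + k : ℕ) : Fin (n+1)) :=
        hcon _ _ ih.symm
      rw [show i + (k+1) = (i+k)+1 by omega, show j + (k+1) = (j+k)+1 by omega]
      show G.s (f (((i+k)+1 : ℕ) : Fin (n+1))) = G.s (f (((j+k)+1 : ℕ) : Fin (n+1)))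
      rw [← G.loop_next hf (i+k), ← G.loop_next hf (j+k), hfe]
  have hper0 : ∀ k, v (k + (n+1)) = v k := by
    intro k
    show G.s (f ((k + (n+1) : ℕ) : Fin (n+1))) = G.s (f (k : Fin (n+1)))
    rw [Nat.cast_add, Fin.natCast_self, add_zero]
  have hex : ∃ m, 0 < m ∧ v m = v 0 := ⟨n+1, Nat.succ_pos n, by simpa using hper0 0⟩
  classical
  obtain ⟨hppos, hvp⟩ := Nat.find_spec hex
  set p := Nat.find hex with hp
  have hmin : ∀ m, m < p → ¬(0 < m ∧ v m = v 0) := fun m hm => Nat.find_min hex hm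
  clear_value p
  clear hp
  have hper : ∀ k, v (k + p) = v k := by
    intro k
    have h := hshift p 0 hvp k
    rw [zero_add] at h
    rw [add_comm]
    exact h
  have hmod : ∀ k, v k = v (k % p) := by
    intro k
    conv_lhs => rw [← Nat.mod_add_div k p]
    generalize k / p = q
    induction q with
    | zero => rw [Nat.mul_zero, Nat.add_zero]
    | succ q ih =>
      rw [show k % p + p * (q+1) = (k % p + p * q) + p by ring, hper, ih]
  have hdist : ∀ a b, a < b → b < p → v a ≠ v b := by
    intro a b hab hbp hvab
    have h1 := hshift a b hvab (p - a)
    rw [show a + (p - a) = p by omega, show b + (p - a) = (b - a) + p by omega, hper] at h1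
    exact hmin (b - a) (by omega) ⟨by omega, by rw [← h1, hvp]⟩
  obtain ⟨m, hm⟩ : ∃ m, p = m + 1 := ⟨p - 1, by omega⟩
  subst hm
  set g : Fin (m+1) → G.Edge := fun j => f (((j : ℕ) : Fin (n+1))) with hg
  have hsg : ∀ j : Fin (m+1), G.s (g j) = v (j : ℕ) := fun j => rfl
  have hloopg : G.IsLoop g := by
    intro j
    have h1 : G.r (g j) = v ((j : ℕ) + 1) := G.loop_next hf (j : ℕ)
    rw [h1, hsg]
    have h2 : ((j + 1 : Fin (m+1)) : ℕ) = ((j : ℕ) + 1) % (m+1) := by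
      rw [Fin.val_add, Fin.val_one', Nat.add_mod, Nat.mod_mod_of_dvd _ dvd_rfl,
        ← Nat.add_mod]
    rw [h2]
    exact hmod _
  have hinj : Function.Injective fun j : Fin (m+1) => G.s (g j) := by
    intro j1 j2 h
    simp only [hsg] at h
    rcases lt_trichotomy (j1 : ℕ) (j2 : ℕ) with hlt | heq | hgt
    · exact absurd h (hdist _ _ hlt j2.isLt)
    · exact Fin.ext heq
    · exact absurd h.symm (hdist _ _ hgt j1.isLt)
  obtain ⟨e, ⟨j, hej⟩, hno⟩ := hexit m g ⟨hloopg, hinj⟩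
  exact hno j (hcon _ e hej)

lemma sum_nsmul_const {ι : Type*} (T : Finset ι) (k : ι → ℕ) (p : G.M) :
    (∑ e ∈ T, k e) • p = ∑ e ∈ T, (k e) • p := by
  classical
  induction T using Finset.induction with
  | empty => rw [Finset.sum_empty, Finset.sum_empty, zero_nsmul]
  | insert _ _ hne ih => rw [Finset.sum_insert hne, Finset.sum_insert hne, add_nsmul, ih]

end RFGraph

/-- For a finite cofinal graph containing a loop, in which every
simple loop has an exit, every nonzero `x ∈ M_E` satisfies `x = x + y` for some
nonzero `y`; consequently `M_E ∖ {0}` is a group under addition. -/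
theorem stmt13 (G : RFGraph) [Finite G.V] [Finite G.Edge]
    (hcof : G.Cofinal)
    (hloop : ∃ (n : ℕ) (f : Fin (n + 1) → G.Edge), G.IsLoop f)
    (hexit : ∀ (n : ℕ) (f : Fin (n + 1) → G.Edge), G.IsSimpleLoop f → G.HasExit f) :
    (∀ x : G.M, x ≠ 0 → ∃ y : G.M, y ≠ 0 ∧ x = x + y) ∧
    (∀ x y : G.M, x ≠ 0 → y ≠ 0 → x + y ≠ 0) ∧
    (∃ z : G.M, z ≠ 0 ∧ (∀ x : G.M, x ≠ 0 → x + z = x) ∧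
      (∀ x : G.M, x ≠ 0 → ∃ w : G.M, w ≠ 0 ∧ x + w = z)) := by
  classical
  obtain ⟨n, f, hf⟩ := hloop
  set p : G.M := G.av (G.s (f 0)) with hpdef
  obtain ⟨δ, hδ0, hδst⟩ := G.loop_absorb hf (G.exists_exit hf hexit)
  set d : G.M := G.graphCon.mk' δ with hddef
  have hd0 : d ≠ 0 := fun h => hδ0 (G.mk_zero_iff.1 h)
  have hpd : p = p + d := by
    have h := G.mk_steps hδst
    rw [map_add] at h
    exact h
  have hB : ∀ b : G.M, b ≠ 0 → ∃ c, b = p + c := by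
    intro b hb
    obtain ⟨u, c₁, hbu⟩ := G.decomp hb
    obtain ⟨c₂, hc₂⟩ := G.reaches_le (G.all_reach hf hcof u)
    exact ⟨c₂ + c₁, by rw [hbu, hc₂, add_assoc]⟩
  have hid : ∀ x : G.M, x ≠ 0 → x + d = x := by
    intro x hx
    obtain ⟨c, hc⟩ := hB x hx
    rw [hc, add_right_comm, ← hpd]
  have hsum : ∀ x y : G.M, x ≠ 0 → x + y ≠ 0 := by
    intro x y hx h0
    obtain ⟨α, rfl⟩ := AddCon.mk'_surjective x
    obtain ⟨β, rfl⟩ := AddCon.mk'_surjective y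
    rw [← map_add] at h0
    exact hx (G.mk_zero_iff.2 (G.addeq0 (G.mk_zero_iff.1 h0)).1)
  have hGv : ∀ u : G.V, ∃ (k : ℕ) (c : G.M), k • p = G.av u + c := by
    by_contra hcon
    push_neg at hcon
    obtain ⟨u₀, hu₀⟩ := hcon
    set H : Set G.V := {u | ∃ (k : ℕ) (c : G.M), k • p = G.av u + c} with hH
    have hu₀' : u₀ ∉ H := by
      rintro ⟨k, c, hkc⟩
      exact hu₀ k c hkc
    have hreach : ∀ u, G.reaches (G.s (f 0)) u → u ∈ H := by
      intro u hr
      obtain ⟨c, hc⟩ := G.reaches_le hr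
      exact ⟨1, c, by rw [one_nsmul]; exact hc⟩
    have hstep : ∀ u, u ∉ H → ∃ e, G.s e = u ∧ G.r e ∉ H := by
      intro u hu
      by_contra hc
      push_neg at hc
      by_cases hem : G.emits u
      · apply hu
        have hT : ∀ e : G.Edge, ∃ (k : ℕ) (c : G.M),
            e ∈ (G.rowFinite u).toFinset → k • p = G.av (G.r e) + c := by
          intro e
          by_cases he : e ∈ (G.rowFinite u).toFinset
          · obtain ⟨k, c, hkc⟩ := hc e ((G.rowFinite u).mem_toFinset.1 he)
            exact ⟨k, c, fun _ => hkc⟩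
          · exact ⟨0, 0, fun h => absurd h he⟩
        choose k c hkc using hT
        refine ⟨∑ e ∈ (G.rowFinite u).toFinset, k e,
          ∑ e ∈ (G.rowFinite u).toFinset, c e, ?_⟩
        rw [G.av_eq_sum hem, G.sum_nsmul_const, ← Finset.sum_add_distrib]
        exact Finset.sum_congr rfl (fun e he => hkc e he)
      · exact hu (hreach u (hcof.1 _ u hem))
    have key : ∀ u : {w : G.V // w ∉ H}, {e : G.Edge // G.s e = u.1 ∧ G.r e ∉ H} :=
      fun u => Classical.indefiniteDescription _ (hstep u.1 u.2)
    let seq : ℕ → {w : G.V // w ∉ H} := fun k =>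
      Nat.rec ⟨u₀, hu₀'⟩ (fun _ prev => ⟨G.r (key prev).1, (key prev).2.2⟩) k
    let γ : ℕ → G.Edge := fun k => (key (seq k)).1
    have hpath : G.IsInfPath γ := fun k => ((key (seq (k+1))).2.1).symm
    obtain ⟨k, hk⟩ := hcof.2 (G.s (f 0)) γ hpath
    have h1 : G.s (γ k) ∈ H := hreach _ hk
    rw [(key (seq k)).2.1] at h1
    exact (seq k).2 h1
  have hG : ∀ x : G.M, ∃ (k : ℕ) (c : G.M), k • p = x + c := by
    have hF : ∀ α : G.F, ∃ (k : ℕ) (c : G.M), k • p = G.graphCon.mk' α + c := by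
      intro α
      induction α using Finsupp.induction with
      | zero => exact ⟨0, 0, by rw [zero_nsmul, map_zero, zero_add]⟩
      | single_add a b f' haf hb ih =>
        obtain ⟨k₁, c₁, h₁⟩ := ih
        obtain ⟨k₂, c₂, h₂⟩ := hGv a
        refine ⟨b * k₂ + k₁, b • c₂ + c₁, ?_⟩
        have hs : G.graphCon.mk' (Finsupp.single a b) = b • G.av a := by
          rw [show (Finsupp.single a b : G.F) = b • Finsupp.single a 1 by
                rw [Finsupp.smul_single, smul_eq_mul, mul_one], map_nsmul]
          rfl
        rw [map_add, hs, add_nsmul, mul_nsmul', h₂, h₁, nsmul_add]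
        abel
    intro x
    obtain ⟨α, rfl⟩ := AddCon.mk'_surjective x
    exact hF α
  have hdd : ∀ k : ℕ, 0 < k → k • d = d := by
    intro k hk
    induction k with
    | zero => omega
    | succ k ih =>
      rcases Nat.eq_zero_or_pos k with rfl | hk'
      · rw [one_nsmul]
      · rw [succ_nsmul, ih hk', hid d hd0]
  refine ⟨fun x hx => ⟨d, hd0, (hid x hx).symm⟩, fun x y hx _ => hsum x y hx,
    ⟨d, hd0, fun x hx => hid x hx, fun x hx => ?_⟩⟩
  obtain ⟨k, c, hk⟩ := hG x
  have hkpos : 0 < k := by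
    rcases Nat.eq_zero_or_pos k with rfl | h
    · rw [zero_nsmul] at hk
      exact absurd hk.symm (hsum x c hx)
    · exact h
  obtain ⟨dt, hdt⟩ := hB d hd0
  have h2 : d = x + (c + k • dt) := by
    rw [← hdd k hkpos, hdt, nsmul_add, hk, add_assoc]
  by_cases hw : c + k • dt = 0
  · have h3 : x = d := by rw [h2, hw, add_zero]
    exact ⟨d, hd0, by rw [hid x hx, h3]⟩
  · exact ⟨c + k • dt, hw, h2.symm⟩
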